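/- Let a weighted directed graph on r vertices be strongly connected with strictly positive weights ŵ, incidence matrices B̂, B̂₀, and let M̂ : Matrix (Fin r) (Fin r) ℝ be diagonal with strictly positive diagonal entries. Set L̂ = M̂⁻¹ * B̂₀ * Matrix.diagonal ŵ * B̂ᵀ. Then the reduced network reaches consensus: for every initial condition x₀ : Fin r → ℝ and all vertices i, j, the difference of trajectories (Matrix.exp ℝ (-t • L̂)).mulVec x₀ evaluated at i minus at j tends to 0 as t → ∞. -/

import Mathlib

open Matrix NormedSpace

attribute [local instance] Matrix.linftyOpSemiNormedRing Matrix.linftyOpNormedRing Matrix.linftyOpNormedAlgebra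


noncomputable def entryCLM (r : ℕ) (i j : Fin r) : Matrix (Fin r) (Fin r) ℝ →L[ℝ] ℝ :=
  LinearMap.toContinuousLinearMap (Matrix.entryLinearMap ℝ ℝ i j)

lemma summable_exp_entry (r : ℕ) (M : Matrix (Fin r) (Fin r) ℝ) (i j : Fin r) :
    Summable (fun n : ℕ => (n.factorial : ℝ)⁻¹ * (M ^ n) i j) := by
  have h := ((expSeries_summable' (𝕂 := ℝ) M).map (entryCLM r i j).toLinearMap.toAddMonoidHom
    (entryCLM r i j).continuous)
  exact h

lemma exp_entry (r : ℕ) (M : Matrix (Fin r) (Fin r) ℝ) (i j : Fin r) :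
    exp M i j = ∑' n : ℕ, (n.factorial : ℝ)⁻¹ * (M ^ n) i j := by
  have h := ContinuousLinearMap.map_tsum (entryCLM r i j)
    (expSeries_summable' (𝕂 := ℝ) M)
  rw [exp_eq_tsum (𝕂 := ℝ)]
  exact h

lemma pow_entry_nonneg {r : ℕ} {N : Matrix (Fin r) (Fin r) ℝ} (hN : ∀ i j, 0 ≤ N i j) :
    ∀ (n : ℕ) (i j : Fin r), 0 ≤ (N ^ n) i j := by
  intro n
  induction n with
  | zero => intro i j; simp [Matrix.one_apply]; positivity
  | succ n ih =>
    intro i j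
    rw [pow_succ, Matrix.mul_apply]
    exact Finset.sum_nonneg fun k _ => mul_nonneg (ih i k) (hN k j)

lemma exp_entry_nonneg {r : ℕ} {N : Matrix (Fin r) (Fin r) ℝ} (hN : ∀ i j, 0 ≤ N i j)
    (i j : Fin r) : 0 ≤ exp N i j := by
  rw [exp_entry]
  exact tsum_nonneg fun n => mul_nonneg (by positivity) (pow_entry_nonneg hN n i j)

lemma exp_entry_ge {r : ℕ} {N : Matrix (Fin r) (Fin r) ℝ} (hN : ∀ i j, 0 ≤ N i j)
    (n : ℕ) (i j : Fin r) : (n.factorial : ℝ)⁻¹ * (N ^ n) i j ≤ exp N i j := by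
  rw [exp_entry]
  exact Summable.le_tsum (summable_exp_entry r N i j) n
    fun n' _ => mul_nonneg (by positivity) (pow_entry_nonneg hN n' i j)

lemma pow_rowsum_zero {r : ℕ} {A : Matrix (Fin r) (Fin r) ℝ} (hA : ∀ i, ∑ j, A i j = 0) :
    ∀ (n : ℕ) (i : Fin r), n ≠ 0 → ∑ j, (A ^ n) i j = 0 := by
  intro n
  induction n with
  | zero => simp
  | succ n ih =>
    intro i _
    rcases Nat.eq_zero_or_pos n with h0 | hpos
    · simpa [h0] using hA i
    · simp_rw [pow_succ, Matrix.mul_apply]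
      rw [Finset.sum_comm]
      simp_rw [← Finset.mul_sum]
      have : ∀ k ∈ Finset.univ, (A ^ n) i k * ∑ j, A k j = 0 := by
        intro k _; rw [hA k, mul_zero]
      simp [Finset.sum_congr rfl this]

lemma exp_rowsum_one {r : ℕ} {A : Matrix (Fin r) (Fin r) ℝ} (hA : ∀ i, ∑ j, A i j = 0)
    (i : Fin r) : ∑ j, exp A i j = 1 := by
  simp_rw [exp_entry]
  rw [← Summable.tsum_finsetSum (fun j _ => summable_exp_entry r A i j)]
  rw [tsum_eq_single 0]
  · simp [Matrix.one_apply, Finset.sum_ite_eq']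
  · intro n hn
    simp_rw [← Finset.mul_sum]
    rw [pow_rowsum_zero hA n i hn, mul_zero]

lemma exp_split {r : ℕ} (L : Matrix (Fin r) (Fin r) ℝ) (c τ : ℝ) :
    exp ((-τ) • L) = Real.exp (-(τ*c)) • exp (τ • (c • (1 : Matrix (Fin r) (Fin r) ℝ) - L)) := by
  have hsplit : (-τ) • L = (-(τ*c)) • (1 : Matrix (Fin r) (Fin r) ℝ)
      + τ • (c • (1 : Matrix (Fin r) (Fin r) ℝ) - L) := by
    rw [neg_smul, smul_sub, smul_smul, neg_smul]; abel
  have hcomm : Commute ((-(τ*c)) • (1 : Matrix (Fin r) (Fin r) ℝ))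
      (τ • (c • (1 : Matrix (Fin r) (Fin r) ℝ) - L)) :=
    ((Commute.one_left _).smul_left _).smul_right _
  rw [hsplit, Matrix.exp_add_of_commute _ _ hcomm]
  have h1 : ((-(τ*c)) • (1 : Matrix (Fin r) (Fin r) ℝ)) = algebraMap ℝ _ (-(τ*c)) := by
    rw [Algebra.algebraMap_eq_smul_one]
  rw [h1]; erw [← algebraMap_exp_comm]; rw [← Real.exp_eq_exp_ℝ, Algebra.algebraMap_eq_smul_one, smul_mul_assoc, one_mul]

section Stochastic

variable {r : ℕ} (hne : (Finset.univ : Finset (Fin r)).Nonempty)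

/-- upper bound for entries of a substochastic image -/
lemma mulVec_le_sup {P : Matrix (Fin r) (Fin r) ℝ} (hP0 : ∀ i j, 0 ≤ P i j)
    (hP1 : ∀ i, ∑ j, P i j = 1) (x : Fin r → ℝ) (i : Fin r) :
    P.mulVec x i ≤ Finset.univ.sup' hne x := by
  calc P.mulVec x i = ∑ k, P i k * x k := by rw [Matrix.mulVec, dotProduct]
    _ ≤ ∑ k, P i k * Finset.univ.sup' hne x := by
        refine Finset.sum_le_sum fun k _ => ?_
        exact mul_le_mul_of_nonneg_left (Finset.le_sup' x (Finset.mem_univ k)) (hP0 i k)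
    _ = Finset.univ.sup' hne x := by rw [← Finset.sum_mul, hP1, one_mul]

lemma inf_le_mulVec {P : Matrix (Fin r) (Fin r) ℝ} (hP0 : ∀ i j, 0 ≤ P i j)
    (hP1 : ∀ i, ∑ j, P i j = 1) (x : Fin r → ℝ) (i : Fin r) :
    Finset.univ.inf' hne x ≤ P.mulVec x i := by
  calc Finset.univ.inf' hne x = ∑ k, P i k * Finset.univ.inf' hne x := by
        rw [← Finset.sum_mul, hP1, one_mul]
    _ ≤ ∑ k, P i k * x k := by
        refine Finset.sum_le_sum fun k _ => ?_
        exact mul_le_mul_of_nonneg_left (Finset.inf'_le x (Finset.mem_univ k)) (hP0 i k)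
    _ = P.mulVec x i := by rw [Matrix.mulVec, dotProduct]

/-- the contraction estimate -/
lemma mulVec_sub_le {P : Matrix (Fin r) (Fin r) ℝ} {ε : ℝ} (hε : 0 ≤ ε)
    (hP0 : ∀ i j, ε ≤ P i j) (hP1 : ∀ i, ∑ j, P i j = 1) (x : Fin r → ℝ) (i j : Fin r) :
    P.mulVec x i - P.mulVec x j
      ≤ (1 - 2*ε) * (Finset.univ.sup' hne x - Finset.univ.inf' hne x) := by
  obtain ⟨k₀, _, hk₀⟩ := Finset.exists_mem_eq_inf' hne x
  obtain ⟨k₁, _, hk₁⟩ := Finset.exists_mem_eq_sup' hne x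
  set S := Finset.univ.sup' hne x with hS
  set I := Finset.univ.inf' hne x with hI
  have hSI : I ≤ S := hk₀ ▸ Finset.le_sup' x (Finset.mem_univ k₀)
  have hup : P.mulVec x i ≤ S - ε * (S - I) := by
    have : P.mulVec x i = ∑ k, P i k * x k := by rw [Matrix.mulVec, dotProduct]
    rw [this]
    have hsplit : ∑ k, P i k * x k
        = P i k₀ * x k₀ + ∑ k ∈ Finset.univ.erase k₀, P i k * x k :=
      (Finset.add_sum_erase Finset.univ (fun k => P i k * x k) (Finset.mem_univ k₀)).symm
    rw [hsplit]
    have h2 : ∑ k ∈ Finset.univ.erase k₀, P i k * x k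
        ≤ ∑ k ∈ Finset.univ.erase k₀, P i k * S := by
      refine Finset.sum_le_sum fun k _ => ?_
      exact mul_le_mul_of_nonneg_left (Finset.le_sup' x (Finset.mem_univ k))
        (le_trans hε (hP0 i k))
    have h3 : ∑ k ∈ Finset.univ.erase k₀, P i k * S = (1 - P i k₀) * S := by
      rw [← Finset.sum_mul]
      congr 1
      have := Finset.add_sum_erase _ (fun k => P i k) (Finset.mem_univ k₀)
      rw [hP1 i] at this
      linarith
    have h4 : P i k₀ * x k₀ = P i k₀ * I := by rw [← hk₀]
    have h5 : P i k₀ * I + (1 - P i k₀) * S = S - P i k₀ * (S - I) := by ring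
    have h6 : S - P i k₀ * (S - I) ≤ S - ε * (S - I) := by
      have := mul_le_mul_of_nonneg_right (hP0 i k₀) (sub_nonneg.mpr hSI)
      linarith
    calc P i k₀ * x k₀ + ∑ k ∈ Finset.univ.erase k₀, P i k * x k
        ≤ P i k₀ * I + (1 - P i k₀) * S := by rw [h4]; linarith
      _ = S - P i k₀ * (S - I) := h5
      _ ≤ S - ε * (S - I) := h6
  have hlo : I + ε * (S - I) ≤ P.mulVec x j := by
    have : P.mulVec x j = ∑ k, P j k * x k := by rw [Matrix.mulVec, dotProduct]
    rw [this]
    have hsplit : ∑ k, P j k * x k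
        = P j k₁ * x k₁ + ∑ k ∈ Finset.univ.erase k₁, P j k * x k :=
      (Finset.add_sum_erase Finset.univ (fun k => P j k * x k) (Finset.mem_univ k₁)).symm
    rw [hsplit]
    have h2 : ∑ k ∈ Finset.univ.erase k₁, P j k * I
        ≤ ∑ k ∈ Finset.univ.erase k₁, P j k * x k := by
      refine Finset.sum_le_sum fun k _ => ?_
      exact mul_le_mul_of_nonneg_left (Finset.inf'_le x (Finset.mem_univ k))
        (le_trans hε (hP0 j k))
    have h3 : ∑ k ∈ Finset.univ.erase k₁, P j k * I = (1 - P j k₁) * I := by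
      rw [← Finset.sum_mul]
      congr 1
      have := Finset.add_sum_erase _ (fun k => P j k) (Finset.mem_univ k₁)
      rw [hP1 j] at this
      linarith
    have h4 : P j k₁ * x k₁ = P j k₁ * S := by rw [← hk₁]
    have h6 : I + ε * (S - I) ≤ P j k₁ * S + (1 - P j k₁) * I := by
      have := mul_le_mul_of_nonneg_right (hP0 j k₁) (sub_nonneg.mpr hSI)
      nlinarith
    calc I + ε * (S - I) ≤ P j k₁ * S + (1 - P j k₁) * I := h6
      _ ≤ P j k₁ * x k₁ + ∑ k ∈ Finset.univ.erase k₁, P j k * x k := by rw [h4]; linarith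
  linarith

end Stochastic


theorem consensus_abstract {r : ℕ} (L : Matrix (Fin r) (Fin r) ℝ)
    (h1 : ∀ i, ∑ j, L i j = 0)
    (h2 : ∀ i j, i ≠ j → L i j ≤ 0)
    (h3 : ∀ i j : Fin r, Relation.ReflTransGen (fun a b => a ≠ b ∧ L a b < 0) i j) :
    ∀ (x₀ : Fin r → ℝ) (i j : Fin r),
      Filter.Tendsto
        (fun τ : ℝ => (exp ((-τ) • L)).mulVec x₀ i - (exp ((-τ) • L)).mulVec x₀ j)
        Filter.atTop (nhds 0) := by
  intro x₀ i j
  have hne : (Finset.univ : Finset (Fin r)).Nonempty := ⟨i, Finset.mem_univ i⟩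
  -- the comparison matrix N
  set c : ℝ := 1 + ∑ i', |L i' i'| with hc
  set N : Matrix (Fin r) (Fin r) ℝ := c • (1 : Matrix (Fin r) (Fin r) ℝ) - L with hNdef
  have hNentry : ∀ a b, N a b = c * (if a = b then 1 else 0) - L a b := by
    intro a b; simp [hNdef, Matrix.one_apply, Matrix.sub_apply]
  have hN0 : ∀ a b, 0 ≤ N a b := by
    intro a b
    rw [hNentry]
    by_cases hab : a = b
    · subst hab
      have hone : (if a = a then (1:ℝ) else 0) = 1 := if_pos rfl
      rw [hone, mul_one]
      have h1' : L a a ≤ |L a a| := le_abs_self _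
      have h2' : |L a a| ≤ ∑ i', |L i' i'| :=
        Finset.single_le_sum (fun i' _ => abs_nonneg (L i' i')) (Finset.mem_univ a)
      rw [hc]; linarith
    · simp only [if_neg hab, mul_zero, zero_sub]
      linarith [h2 a b hab]
  have hNedge : ∀ a b, a ≠ b → L a b < 0 → 0 < N a b := by
    intro a b hab hLab
    rw [hNentry, if_neg hab, mul_zero]
    linarith
  -- reachability gives positive entries of powers of N
  have hpath : ∀ a b : Fin r, ∃ n : ℕ, 0 < (N ^ n) a b := by
    intro a b
    induction h3 a b with
    | refl => exact ⟨0, by simp [Matrix.one_apply]⟩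
    | tail hab hbc ih =>
      obtain ⟨n, hn⟩ := ih
      rename_i b' c'
      refine ⟨n + 1, ?_⟩
      rw [pow_succ, Matrix.mul_apply]
      refine Finset.sum_pos' (fun k _ => mul_nonneg (pow_entry_nonneg hN0 n a k) (hN0 k c')) ?_
      exact ⟨b', Finset.mem_univ b', mul_pos hn (hNedge b' c' hbc.1 hbc.2)⟩
  -- the transition matrices
  set P : ℝ → Matrix (Fin r) (Fin r) ℝ := fun τ => exp ((-τ) • L) with hPdef
  have hPsplit : ∀ τ, P τ = Real.exp (-(τ*c)) • exp (τ • N) := fun τ => exp_split L c τ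
  have hP0 : ∀ τ, 0 ≤ τ → ∀ a b, 0 ≤ P τ a b := by
    intro τ hτ a b
    rw [hPsplit]
    have : ∀ a b, 0 ≤ (τ • N) a b := fun a b => by
      simp only [Matrix.smul_apply, smul_eq_mul]; exact mul_nonneg hτ (hN0 a b)
    simpa using mul_nonneg (Real.exp_pos _).le (exp_entry_nonneg this a b)
  have hPpos : ∀ τ, 0 < τ → ∀ a b, 0 < P τ a b := by
    intro τ hτ a b
    obtain ⟨n, hn⟩ := hpath a b
    have hτN : ∀ a b, 0 ≤ (τ • N) a b := fun a b => by
      simp only [Matrix.smul_apply, smul_eq_mul]; exact mul_nonneg hτ.le (hN0 a b)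
    have key : (n.factorial : ℝ)⁻¹ * ((τ • N) ^ n) a b ≤ exp (τ • N) a b :=
      exp_entry_ge hτN n a b
    have hval : ((τ • N) ^ n) a b = τ ^ n * (N ^ n) a b := by
      rw [smul_pow]; simp
    have hpos : 0 < (n.factorial : ℝ)⁻¹ * ((τ • N) ^ n) a b := by
      rw [hval]
      have : (0:ℝ) < (n.factorial : ℝ)⁻¹ := by positivity
      positivity
    rw [hPsplit]
    simp only [Matrix.smul_apply, smul_eq_mul]
    exact mul_pos (Real.exp_pos _) (lt_of_lt_of_le hpos key)
  have hProw : ∀ τ a, ∑ b, P τ a b = 1 := by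
    intro τ a
    refine exp_rowsum_one (fun a' => ?_) a
    simp only [Matrix.smul_apply, smul_eq_mul, ← Finset.mul_sum]
    rw [h1 a', mul_zero]
  -- semigroup property
  have hPadd : ∀ σ τ : ℝ, P (σ + τ) = P σ * P τ := by
    intro σ τ
    have : (-(σ + τ)) • L = (-σ) • L + (-τ) • L := by rw [← add_smul]; ring_nf
    rw [hPdef]
    simp only
    rw [this, Matrix.exp_add_of_commute _ _ (((Commute.refl L).smul_left _).smul_right _)]
  by_cases hij : i = j
  · subst hij; simpa using tendsto_const_nhds
  -- diameter functional
  set D : (Fin r → ℝ) → ℝ := fun y => Finset.univ.sup' hne y - Finset.univ.inf' hne y with hD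
  have hDnonneg : ∀ y, 0 ≤ D y := by
    intro y
    have := Finset.inf'_le y (Finset.mem_univ i)
    have := Finset.le_sup' y (Finset.mem_univ i)
    simp only [hD]; linarith
  have habsle : ∀ (y : Fin r → ℝ) (a b : Fin r), |y a - y b| ≤ D y := by
    intro y a b
    rw [abs_le]
    constructor
    · have h1' := Finset.inf'_le y (Finset.mem_univ a)
      have h2' := Finset.le_sup' y (Finset.mem_univ b)
      simp only [hD]; linarith
    · have h1' := Finset.le_sup' y (Finset.mem_univ a)
      have h2' := Finset.inf'_le y (Finset.mem_univ b)
      simp only [hD]; linarith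
  have hDmono : ∀ (τ : ℝ), 0 ≤ τ → ∀ y, D ((P τ).mulVec y) ≤ D y := by
    intro τ hτ y
    simp only [hD]
    obtain ⟨a, _, ha⟩ := Finset.exists_mem_eq_sup' hne ((P τ).mulVec y)
    obtain ⟨b, _, hb⟩ := Finset.exists_mem_eq_inf' hne ((P τ).mulVec y)
    rw [ha, hb]
    have h1' := mulVec_le_sup hne (hP0 τ hτ) (hProw τ) y a
    have h2' := inf_le_mulVec hne (hP0 τ hτ) (hProw τ) y b
    linarith
  haveI : Nonempty (Fin r) := ⟨i⟩
  -- the contraction constant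
  set ε : ℝ := Finset.univ.inf' (Finset.univ_nonempty (α := Fin r × Fin r))
      (fun p : Fin r × Fin r => P 1 p.1 p.2) with hε
  have hεle : ∀ a b, ε ≤ P 1 a b := fun a b =>
    Finset.inf'_le _ (Finset.mem_univ (a, b))
  have hεpos : 0 < ε := by
    obtain ⟨p, _, hp⟩ := Finset.exists_mem_eq_inf' (Finset.univ_nonempty (α := Fin r × Fin r))
      (fun p : Fin r × Fin r => P 1 p.1 p.2)
    rw [hε, hp]
    exact hPpos 1 one_pos p.1 p.2
  have hε2 : 2 * ε ≤ 1 := by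
    have hii := hεle i i
    have hijle := hεle i j
    have : P 1 i i + P 1 i j ≤ ∑ b, P 1 i b := by
      have := Finset.sum_le_sum_of_subset_of_nonneg
        (Finset.subset_univ {i, j}) (fun b _ _ => hP0 1 zero_le_one i b)
      rwa [Finset.sum_pair hij] at this
    rw [hProw 1 i] at this
    linarith
  set q : ℝ := 1 - 2 * ε with hq
  have hq0 : 0 ≤ q := by simp only [hq]; linarith
  have hq1 : q < 1 := by simp only [hq]; linarith
  have hcontract : ∀ y, D ((P 1).mulVec y) ≤ q * D y := by
    intro y
    simp only [hD]
    obtain ⟨a, _, ha⟩ := Finset.exists_mem_eq_sup' hne ((P 1).mulVec y)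
    obtain ⟨b, _, hb⟩ := Finset.exists_mem_eq_inf' hne ((P 1).mulVec y)
    rw [ha, hb]
    exact mulVec_sub_le hne hεpos.le hεle (hProw 1) y a b
  -- iterating
  have hiter : ∀ (n : ℕ) (ρ : ℝ), 0 ≤ ρ → D ((P (n + ρ)).mulVec x₀) ≤ q ^ n * D x₀ := by
    intro n
    induction n with
    | zero => intro ρ hρ; simpa using hDmono ρ hρ x₀
    | succ n ih =>
      intro ρ hρ
      have heq : ((n : ℝ) + 1 + ρ) = 1 + ((n : ℝ) + ρ) := by ring
      have : P ((n:ℝ) + 1 + ρ) = P 1 * P ((n:ℝ) + ρ) := by rw [heq, hPadd]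
      push_cast
      rw [this, ← Matrix.mulVec_mulVec]
      calc D ((P 1).mulVec ((P ((n:ℝ) + ρ)).mulVec x₀)) ≤ q * D ((P ((n:ℝ) + ρ)).mulVec x₀) :=
            hcontract _
        _ ≤ q * (q ^ n * D x₀) := by
            exact mul_le_mul_of_nonneg_left (ih ρ hρ) hq0
        _ = q ^ (n + 1) * D x₀ := by ring
  have hbound : ∀ τ : ℝ, 0 ≤ τ →
      |(P τ).mulVec x₀ i - (P τ).mulVec x₀ j| ≤ q ^ (⌊τ⌋₊) * D x₀ := by
    intro τ hτ
    have h0 := habsle ((P τ).mulVec x₀) i j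
    have hτeq : τ = (⌊τ⌋₊ : ℝ) + (τ - ⌊τ⌋₊) := by ring
    have hfrac : 0 ≤ τ - ⌊τ⌋₊ := sub_nonneg.mpr (Nat.floor_le hτ)
    have := hiter ⌊τ⌋₊ (τ - ⌊τ⌋₊) hfrac
    rw [← hτeq] at this
    linarith
  -- conclusion by squeezing
  have hg : Filter.Tendsto (fun τ : ℝ => q ^ (⌊τ⌋₊) * D x₀) Filter.atTop (nhds 0) := by
    have h1' : Filter.Tendsto (fun n : ℕ => q ^ n * D x₀) Filter.atTop (nhds 0) := by
      have := (tendsto_pow_atTop_nhds_zero_of_lt_one hq0 hq1).mul_const (D x₀)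
      simpa using this
    exact h1'.comp tendsto_nat_floor_atTop
  refine squeeze_zero_norm' ?_ hg
  filter_upwards [Filter.eventually_ge_atTop (0:ℝ)] with τ hτ
  have hb := hbound τ hτ
  simp only [hPdef] at hb
  simpa using hb

/-- A strongly connected reduced network `ẋ = -L̂ x`, where
`L̂ = M̂⁻¹ B̂₀ (diag ŵ) B̂ᵀ` with positive weights and positive diagonal `M̂`, reaches
consensus: for every initial condition the pairwise differences of the trajectory
components tend to zero. -/

theorem reduced_network_reaches_consensus
    (r m : ℕ) (s t : Fin m → Fin r) (hst : ∀ k, s k ≠ t k)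
    (what : Fin m → ℝ) (hwhat : ∀ k, 0 < what k)
    (hconn : ∀ i j : Fin r, Relation.ReflTransGen (fun a b => ∃ k, s k = a ∧ t k = b) i j)
    (Bhat Bhat₀ : Matrix (Fin r) (Fin m) ℝ)
    (hBhat : ∀ i k, Bhat i k = if i = s k then 1 else if i = t k then -1 else 0)
    (hBhat₀ : ∀ i k, Bhat₀ i k = if i = s k then 1 else 0)
    (d : Fin r → ℝ) (hd : ∀ i, 0 < d i)
    (Mhat : Matrix (Fin r) (Fin r) ℝ) (hMhat : Mhat = Matrix.diagonal d)
    (Lhat : Matrix (Fin r) (Fin r) ℝ)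
    (hLhat : Lhat = Mhat⁻¹ * Bhat₀ * Matrix.diagonal what * Bhatᵀ) :
    ∀ (x₀ : Fin r → ℝ) (i j : Fin r),
      Filter.Tendsto
        (fun τ : ℝ =>
          (exp ((-τ) • Lhat)).mulVec x₀ i - (exp ((-τ) • Lhat)).mulVec x₀ j)
        Filter.atTop (nhds 0) := by
  -- entries of Lhat
  have hMinv : Mhat⁻¹ = Matrix.diagonal (fun i => (d i)⁻¹) := by
    rw [hMhat]
    refine Matrix.inv_eq_right_inv ?_
    rw [Matrix.diagonal_mul_diagonal]
    convert Matrix.diagonal_one with i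
    exact mul_inv_cancel₀ (hd i).ne'
  have hLentry : ∀ i j, Lhat i j
      = ∑ k, (d i)⁻¹ * Bhat₀ i k * what k * Bhat j k := by
    intro i j
    rw [hLhat, hMinv]
    rw [Matrix.mul_apply]
    refine Finset.sum_congr rfl fun k _ => ?_
    rw [Matrix.transpose_apply, Matrix.mul_apply]
    rw [Finset.sum_eq_single k]
    · rw [Matrix.diagonal_mul, Matrix.diagonal_apply_eq]
    · intro b _ hb
      rw [Matrix.diagonal_apply_ne _ hb, mul_zero]
    · intro h; exact absurd (Finset.mem_univ k) h
  -- column sums of Bhat vanish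
  have hBcol : ∀ k, ∑ j, Bhat j k = 0 := by
    intro k
    have : ∀ j, Bhat j k = (if j = s k then (1:ℝ) else 0) + (if j = t k then (-1:ℝ) else 0) := by
      intro j
      rw [hBhat]
      by_cases h1 : j = s k
      · subst h1
        rw [if_pos rfl, if_pos rfl, if_neg (fun h => hst k (by rw [← h])), add_zero]
      · rw [if_neg h1, if_neg h1, zero_add]
    simp_rw [this, Finset.sum_add_distrib]
    simp [Finset.sum_ite_eq']
  -- hypothesis 1 : row sums of Lhat vanish
  have h1 : ∀ i, ∑ j, Lhat i j = 0 := by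
    intro i
    simp_rw [hLentry]
    rw [Finset.sum_comm]
    refine Finset.sum_eq_zero fun k _ => ?_
    simp_rw [← Finset.mul_sum]
    rw [hBcol k, mul_zero]
  -- hypothesis 2 : nonpositive off-diagonal entries
  have h2 : ∀ i j, i ≠ j → Lhat i j ≤ 0 := by
    intro i j hij
    rw [hLentry]
    refine Finset.sum_nonpos fun k _ => ?_
    rw [hBhat₀]
    by_cases hik : i = s k
    · rw [if_pos hik, mul_one]
      have hj : Bhat j k ≤ 0 := by
        rw [hBhat]
        rw [if_neg (fun h => hij (hik.trans h.symm))]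
        split <;> norm_num
      have : 0 ≤ (d i)⁻¹ * what k := mul_nonneg (inv_nonneg.mpr (hd i).le) (hwhat k).le
      exact mul_nonpos_of_nonneg_of_nonpos this hj
    · rw [if_neg hik, mul_zero, zero_mul, zero_mul]
  -- hypothesis 3 : strong connectivity with negative edge entries
  have h3 : ∀ i j : Fin r, Relation.ReflTransGen (fun a b => a ≠ b ∧ Lhat a b < 0) i j := by
    intro i j
    refine Relation.ReflTransGen.mono ?_ i j (hconn i j)
    rintro a b ⟨k, hka, hkb⟩
    have hab : a ≠ b := by rw [← hka, ← hkb]; exact hst k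
    refine ⟨hab, ?_⟩
    rw [hLentry]
    have hterm : ∀ k' ∈ Finset.univ, (d a)⁻¹ * Bhat₀ a k' * what k' * Bhat b k' ≤ (0:ℝ) := by
      intro k' _
      rw [hBhat₀]
      by_cases hik : a = s k'
      · rw [if_pos hik, mul_one]
        have hj : Bhat b k' ≤ 0 := by
          rw [hBhat]
          rw [if_neg (fun h => hab (by rw [h, ← hik]))]
          split <;> norm_num
        have : 0 ≤ (d a)⁻¹ * what k' := mul_nonneg (inv_nonneg.mpr (hd a).le) (hwhat k').le
        exact mul_nonpos_of_nonneg_of_nonpos this hj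
      · rw [if_neg hik, mul_zero, zero_mul, zero_mul]
    have hklt : (d a)⁻¹ * Bhat₀ a k * what k * Bhat b k < 0 := by
      rw [hBhat₀, if_pos hka.symm, mul_one, hBhat,
        if_neg (fun h => hab (by rw [h, hka])), if_pos hkb.symm]
      have : 0 < (d a)⁻¹ * what k := mul_pos (inv_pos.mpr (hd a)) (hwhat k)
      linarith
    calc ∑ k', (d a)⁻¹ * Bhat₀ a k' * what k' * Bhat b k'
        < ∑ _k' : Fin m, (0:ℝ) :=
          Finset.sum_lt_sum hterm ⟨k, Finset.mem_univ k, hklt⟩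
      _ = 0 := Finset.sum_const_zero
  exact consensus_abstract Lhat h1 h2 h3
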